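/- Let G be a finitely generated group and Γ = A ×_{σ,χ} B a finite extension with A abelian. Then |Hom(G,Γ)| = Σ_{ρ ∈ Hom(G,B)} ε_χ(ρ) · |Z¹_{σρ}(G,A)|, where ε_χ(ρ) = 1 if some 1-cochain f : G → A satisfies δ¹f = −ρ*χ, and ε_χ(ρ) = 0 otherwise. -/

import Mathlib

/-- `AddAut A` is now an additive group; the old multiplicative group of additive
automorphisms is `Multiplicative (AddAut A)`, applied to elements of `A` through this coercion. -/
instance {A : Type*} [AddCommGroup A] : CoeFun (Multiplicative (AddAut A)) (fun _ => A → A) :=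
  ⟨fun f => ⇑(Multiplicative.toAdd f : AddAut A)⟩

/-- The underlying type of the extension `A ×_{σ,χ} B` of a group `B` by an abelian
group `A`, with monodromy `σ : B → Aut(A)` and `2`-cocycle `χ : B × B → A`. -/
@[ext] structure CocycleExtension {A B : Type*} [AddCommGroup A] [Group B]
    (σ : B →* Multiplicative (AddAut A)) (χ : B → B → A) where
  fst : A
  snd : B

/-- `χ` is a normalized `2`-cocycle for the action `σ`. -/
class IsNormalizedCocycle {A B : Type*} [AddCommGroup A] [Group B]
    (σ : B →* Multiplicative (AddAut A)) (χ : B → B → A) : Prop where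
  cocycle : ∀ b₁ b₂ b₃ : B,
    χ b₁ b₂ + χ (b₁ * b₂) b₃ = σ b₁ (χ b₂ b₃) + χ b₁ (b₂ * b₃)
  one_left : ∀ b : B, χ 1 b = 0
  one_right : ∀ b : B, χ b 1 = 0

namespace CocycleExtension

variable {A B : Type*} [AddCommGroup A] [Group B]
  (σ : B →* Multiplicative (AddAut A)) (χ : B → B → A) [h : IsNormalizedCocycle σ χ]

/-- The group `A ×_{σ,χ} B`, with multiplication
`(a₁,b₁)(a₂,b₂) = (a₁ + σ_{b₁}(a₂) + χ(b₁,b₂), b₁b₂)`. -/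
instance : Group (CocycleExtension σ χ) where
  mul p q := ⟨p.fst + σ p.snd q.fst + χ p.snd q.snd, p.snd * q.snd⟩
  one := ⟨0, 1⟩
  inv p := ⟨-(σ p.snd⁻¹ p.fst) - χ p.snd⁻¹ p.snd, p.snd⁻¹⟩
  mul_assoc p q r := by
    have key := h.cocycle p.snd q.snd r.snd
    ext
    · show p.fst + σ p.snd q.fst + χ p.snd q.snd + σ (p.snd * q.snd) r.fst
          + χ (p.snd * q.snd) r.snd
        = p.fst + σ p.snd (q.fst + σ q.snd r.fst + χ q.snd r.snd)
          + χ p.snd (q.snd * r.snd)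
      calc p.fst + σ p.snd q.fst + χ p.snd q.snd + σ (p.snd * q.snd) r.fst
            + χ (p.snd * q.snd) r.snd
          = p.fst + σ p.snd q.fst + σ p.snd (σ q.snd r.fst)
            + (χ p.snd q.snd + χ (p.snd * q.snd) r.snd) := by
            simp only [map_mul, toAdd_mul, AddAut.add_apply]; abel
        _ = p.fst + σ p.snd q.fst + σ p.snd (σ q.snd r.fst)
            + (σ p.snd (χ q.snd r.snd) + χ p.snd (q.snd * r.snd)) := by rw [key]
        _ = p.fst + σ p.snd (q.fst + σ q.snd r.fst + χ q.snd r.snd)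
            + χ p.snd (q.snd * r.snd) := by
            simp only [map_add]; abel
    · show p.snd * q.snd * r.snd = p.snd * (q.snd * r.snd)
      exact mul_assoc _ _ _
  one_mul p := by
    ext
    · show 0 + σ 1 p.fst + χ 1 p.snd = p.fst
      simp [h.one_left]
    · show 1 * p.snd = p.snd
      exact one_mul _
  mul_one p := by
    ext
    · show p.fst + σ p.snd 0 + χ p.snd 1 = p.fst
      simp [h.one_right]
    · show p.snd * 1 = p.snd
      exact mul_one _
  inv_mul_cancel p := by
    ext
    · show -(σ p.snd⁻¹ p.fst) - χ p.snd⁻¹ p.snd + σ p.snd⁻¹ p.fst + χ p.snd⁻¹ p.snd = 0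
      abel
    · show p.snd⁻¹ * p.snd = 1
      exact inv_mul_cancel _

/-- The canonical projection `A ×_{σ,χ} B → B`. -/
def proj : CocycleExtension σ χ →* B where
  toFun p := p.snd
  map_one' := rfl
  map_mul' _ _ := rfl

end CocycleExtension


open Classical

section Aux

/-- A finitely generated group has only finitely many homs into a finite monoid. -/
lemma finite_monoidHom_of_fg {G M : Type*} [Group G] [Group.FG G] [Monoid M] [Finite M] :
    Finite (G →* M) := by
  obtain ⟨S, hS, hSfin⟩ := Group.fg_iff.mp ‹Group.FG G›
  haveI := hSfin.to_subtype
  exact Finite.of_injective (fun φ : G →* M => (fun s : S => φ s))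
    (fun φ ψ h => MonoidHom.eq_of_eqOn_dense hS (fun x hx => congrFun h ⟨x, hx⟩))

variable {A B : Type*} [AddCommGroup A] [Group B]

instance {σ : B →* Multiplicative (AddAut A)} {χ : B → B → A} [Finite A] [Finite B] :
    Finite (CocycleExtension σ χ) :=
  Finite.of_injective (fun p : CocycleExtension σ χ => (p.fst, p.snd))
    (fun p q h => by
      cases p; cases q
      simpa [Prod.ext_iff, CocycleExtension.ext_iff] using h)

/-- The fiber of `proj ∘ ·` over `ρ` is the set of `1`-cochains killing `-ρ*χ`. -/
noncomputable def fiberEquiv (σ : B →* Multiplicative (AddAut A)) (χ : B → B → A) [h : IsNormalizedCocycle σ χ]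
    {G : Type*} [Group G] (ρ : G →* B) :
    {φ : G →* CocycleExtension σ χ // (CocycleExtension.proj σ χ).comp φ = ρ} ≃
    {f : G → A // ∀ g h : G, f (g * h) = f g + σ (ρ g) (f h) + χ (ρ g) (ρ h)} where
  toFun φ := ⟨fun g => (φ.1 g).fst, by
    intro g h'
    have hsnd : ∀ g, (φ.1 g).snd = ρ g := fun g => DFunLike.congr_fun φ.2 g
    have hm : (φ.1 (g * h')).fst
        = (φ.1 g).fst + σ (φ.1 g).snd (φ.1 h').fst + χ (φ.1 g).snd (φ.1 h').snd :=
      congrArg CocycleExtension.fst (map_mul φ.1 g h')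
    show (φ.1 (g * h')).fst = (φ.1 g).fst + σ (ρ g) ((φ.1 h').fst) + χ (ρ g) (ρ h')
    rw [hm, hsnd, hsnd]⟩
  invFun f := ⟨{
    toFun := fun g => ⟨f.1 g, ρ g⟩
    map_one' := by
      have h1 := f.2 1 1
      simp only [one_mul, map_one, toAdd_one, AddAut.one_apply, h.one_left, add_zero] at h1
      exact CocycleExtension.ext (left_eq_add.mp h1) (map_one ρ)
    map_mul' := fun g h' => CocycleExtension.ext (f.2 g h') (map_mul ρ g h') },
    by ext g; rfl⟩
  left_inv φ := Subtype.ext (MonoidHom.ext fun g =>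
    CocycleExtension.ext rfl (DFunLike.congr_fun φ.2 g).symm)
  right_inv f := Subtype.ext rfl

/-- Translating by a fixed solution gives a bijection with cocycles. -/
noncomputable def shiftEquiv (σ : B →* Multiplicative (AddAut A)) (χ : B → B → A)
    {G : Type*} [Group G] (ρ : G →* B)
    (f₀ : G → A) (hf₀ : ∀ g h : G, f₀ (g * h) = f₀ g + σ (ρ g) (f₀ h) + χ (ρ g) (ρ h)) :
    {f : G → A // ∀ g h : G, f (g * h) = f g + σ (ρ g) (f h) + χ (ρ g) (ρ h)} ≃
    {f : G → A // ∀ g h : G, f (g * h) = f g + σ (ρ g) (f h)} where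
  toFun f := ⟨f.1 - f₀, by
    intro g h
    simp only [Pi.sub_apply, f.2 g h, hf₀ g h, map_sub]
    abel⟩
  invFun f := ⟨f.1 + f₀, by
    intro g h
    simp only [Pi.add_apply, f.2 g h, hf₀ g h, map_add]
    abel⟩
  left_inv f := Subtype.ext (by simp)
  right_inv f := Subtype.ext (by simp)

end Aux

open Classical in
/-- For a finitely generated group `G` and a finite extension `Γ = A ×_{σ,χ} B` with `A`
abelian, `|Hom(G,Γ)| = ∑_{ρ ∈ Hom(G,B)} ε_χ(ρ) ⬝ |Z¹_{σρ}(G,A)|`, where `ε_χ(ρ) = 1` if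
some `1`-cochain `f : G → A` satisfies `δ¹f = -ρ*χ` (i.e.
`f(gh) = f(g) + σ_{ρ(g)}(f(h)) + χ(ρ(g),ρ(h))`), and `ε_χ(ρ) = 0` otherwise. -/
theorem card_hom_cocycleExtension
    {A B : Type*} [AddCommGroup A] [Finite A] [Group B] [Finite B]
    (σ : B →* Multiplicative (AddAut A)) (χ : B → B → A) [IsNormalizedCocycle σ χ]
    (G : Type*) [Group G] [Group.FG G] :
    Nat.card (G →* CocycleExtension σ χ) =
      ∑ᶠ ρ : G →* B,
        (if ∃ f : G → A, ∀ g h : G,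
            f (g * h) = f g + σ (ρ g) (f h) + χ (ρ g) (ρ h) then 1 else 0) *
          Nat.card {f : G → A // ∀ g h : G, f (g * h) = f g + σ (ρ g) (f h)} := by
    classical
  haveI : Finite (G →* CocycleExtension σ χ) := finite_monoidHom_of_fg
  haveI : Finite (G →* B) := finite_monoidHom_of_fg
  letI : Fintype (G →* CocycleExtension σ χ) := Fintype.ofFinite _
  letI : Fintype (G →* B) := Fintype.ofFinite _
  rw [finsum_eq_sum_of_fintype]
  rw [Nat.card_congr (Equiv.sigmaFiberEquiv
      (fun φ : G →* CocycleExtension σ χ => (CocycleExtension.proj σ χ).comp φ)).symm,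
    Nat.card_eq_fintype_card, Fintype.card_sigma]
  simp only [← Nat.card_eq_fintype_card]
  refine Finset.sum_congr rfl fun ρ _ => ?_
  rw [Nat.card_congr (fiberEquiv σ χ ρ)]
  by_cases hρ : ∃ f : G → A, ∀ g h : G,
      f (g * h) = f g + σ (ρ g) (f h) + χ (ρ g) (ρ h)
  · obtain ⟨f₀, hf₀⟩ := hρ
    rw [if_pos ⟨f₀, hf₀⟩, one_mul, Nat.card_congr (shiftEquiv σ χ ρ f₀ hf₀)]
  · rw [if_neg hρ, zero_mul]
    haveI : IsEmpty {f : G → A // ∀ g h : G,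
        f (g * h) = f g + σ (ρ g) (f h) + χ (ρ g) (ρ h)} :=
      ⟨fun f => hρ ⟨f.1, f.2⟩⟩
    exact Nat.card_of_isEmpty
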